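/- Let E be the coarse structure on ℕ with base {(F × F) ∪ A : F a finite subset of ℕ}, where A = {(2n+1, 2n+2), (2n+2, 2n+1) : n ∈ ω} (together with the diagonal). Then the set of even numbers 2ℕ is large and discrete in (ℕ, E), so (ℕ, E) is coarsely discrete; moreover, (ℕ, E) is not λ-rigid. -/

import Mathlib

open Set

/-- A coarse structure (ballean) on a set `X`. -/
structure CoarseStruct (X : Type*) where
  sets : Set (Set (X × X))
  diagonal_mem : Set.diagonal X ∈ sets
  diagonal_subset : ∀ E ∈ sets, Set.diagonal X ⊆ E
  comp_mem : ∀ E ∈ sets, ∀ F ∈ sets,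
    {p : X × X | ∃ z, (p.1, z) ∈ E ∧ (z, p.2) ∈ F} ∈ sets
  inv_mem : ∀ E ∈ sets, {p : X × X | (p.2, p.1) ∈ E} ∈ sets
  subset_mem : ∀ E ∈ sets, ∀ E' : Set (X × X),
    Set.diagonal X ⊆ E' → E' ⊆ E → E' ∈ sets
  cover : ∀ p : X × X, ∃ E ∈ sets, p ∈ E

namespace CoarseStruct

variable {X : Type*}

/-- The ball `E[A]` of radius `E` around `A`. -/
def ball (E : Set (X × X)) (A : Set X) : Set X := {y | ∃ a ∈ A, (a, y) ∈ E}

/-- A set is bounded if it is contained in a ball around a point. -/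
def IsBounded (C : CoarseStruct X) (B : Set X) : Prop :=
  ∃ E ∈ C.sets, ∃ x : X, B ⊆ ball E {x}

/-- Closeness: `A δ B`. -/
def Close (C : CoarseStruct X) (A B : Set X) : Prop :=
  ∃ E ∈ C.sets, A ⊆ ball E B ∧ B ⊆ ball E A

/-- Linkness: `A λ B`. -/
def Linked (C : CoarseStruct X) (A B : Set X) : Prop :=
  (C.IsBounded A ∧ C.IsBounded B) ∨
  ∃ A' B' : Set X, A' ⊆ A ∧ B' ⊆ B ∧ ¬C.IsBounded A' ∧ ¬C.IsBounded B' ∧ C.Close A' B'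

def LambdaEquiv (C C' : CoarseStruct X) : Prop :=
  ∀ A B : Set X, C.Linked A B ↔ C'.Linked A B

def DeltaEquiv (C C' : CoarseStruct X) : Prop :=
  ∀ A B : Set X, C.Close A B ↔ C'.Close A B

def Discrete (C : CoarseStruct X) : Prop :=
  ∀ E ∈ C.sets, ∃ B : Set X, C.IsBounded B ∧ ∀ x ∉ B, ball E {x} = {x}

def Large (C : CoarseStruct X) (Y : Set X) : Prop :=
  ∃ E ∈ C.sets, ball E Y = Set.univ

/-- The subballean on `Y` is discrete. -/
def DiscreteOn (C : CoarseStruct X) (Y : Set X) : Prop :=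
  ∀ E ∈ C.sets, ∃ B : Set X, C.IsBounded B ∧ ∀ y ∈ Y \ B, ball E {y} ∩ Y = {y}

def CoarselyDiscrete (C : CoarseStruct X) : Prop :=
  ∃ Y : Set X, C.Large Y ∧ C.DiscreteOn Y

def LambdaRigid (C : CoarseStruct X) : Prop :=
  ∀ C' : CoarseStruct X, LambdaEquiv C C' → C' = C

def DeltaRigid (C : CoarseStruct X) : Prop :=
  ∀ C' : CoarseStruct X, DeltaEquiv C C' → C' = C

def IsBase (C : CoarseStruct X) (B : Set (Set (X × X))) : Prop :=
  B ⊆ C.sets ∧ ∀ E ∈ C.sets, ∃ E' ∈ B, E ⊆ E'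

/-- Metrizable: the coarse structure has a countable base. -/
def Metrizable (C : CoarseStruct X) : Prop :=
  ∃ B : Set (Set (X × X)), B.Countable ∧ C.IsBase B

/-- Ordinal: the coarse structure has a base linearly ordered by inclusion. -/
def Ordinal (C : CoarseStruct X) : Prop :=
  ∃ B : Set (Set (X × X)), C.IsBase B ∧ IsChain (· ⊆ ·) B

def MacroUniform (C : CoarseStruct X) (f : X → ℝ) : Prop :=
  ∀ E ∈ C.sets, ∃ r : ℝ, 0 < r ∧
    ∀ x : X, ∀ y ∈ ball E {x}, ∀ z ∈ ball E {x}, |f y - f z| ≤ r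

def Submetrizable (C : CoarseStruct X) : Prop :=
  ¬C.IsBounded Set.univ ∧ ∃ C'' : CoarseStruct X,
    C.sets ⊆ C''.sets ∧ ¬C''.IsBounded Set.univ ∧ C''.Metrizable

def SlowlyOscillating (C : CoarseStruct X) (f : X → ℝ) : Prop :=
  ∀ E ∈ C.sets, ∀ ε : ℝ, 0 < ε → ∃ B : Set X, C.IsBounded B ∧
    ∀ x ∉ B, ∀ y ∈ ball E {x}, ∀ z ∈ ball E {x}, |f y - f z| < ε

/-- The entourage `H_{(E,Φ)}`: `H[x] = {x}` for `x ∈ Φ` and `H[x] = E[x] \ Φ` for `x ∉ Φ`. -/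
def EPhiBase (E : Set (X × X)) (Φ : Set X) : Set (X × X) :=
  {p | (p.1 ∈ Φ ∧ p.1 = p.2) ∨ (p.1 ∉ Φ ∧ p.2 ∉ Φ ∧ (p.1, p.2) ∈ E)}

/-- The family of entourages of the coarse structure `E_φ` with base `{H_{(E,Φ)}}`. -/
def EPhiSets (C : CoarseStruct X) (φ : Filter X) : Set (Set (X × X)) :=
  {E' | Set.diagonal X ⊆ E' ∧ ∃ E ∈ C.sets, ∃ Φ ∈ φ, E' ⊆ EPhiBase E Φ}

/-- The set `B♯` of ultrafilters containing the complement of every bounded set. -/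
def Bsharp (C : CoarseStruct X) : Set (Ultrafilter X) :=
  {p | ∀ B : Set X, C.IsBounded B → Bᶜ ∈ p}

/-- Parallelity of ultrafilters: `p ∥ q`. -/
def Parallel (C : CoarseStruct X) (p q : Ultrafilter X) : Prop :=
  ∃ E ∈ C.sets, ∀ P ∈ p, ball E P ∈ q

def AsympDisjoint (C : CoarseStruct X) (A B : Set X) : Prop :=
  ∀ E ∈ C.sets, C.IsBounded (ball E A ∩ ball E B)

def AsympNbhd (C : CoarseStruct X) (A U : Set X) : Prop :=
  ∀ E ∈ C.sets, C.IsBounded (ball E A \ U)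

def Normal (C : CoarseStruct X) : Prop :=
  ∀ A B : Set X, C.AsympDisjoint A B →
    ∃ U V : Set X, C.AsympNbhd A U ∧ C.AsympNbhd B V ∧ Disjoint U V

end CoarseStruct

/-- The relation `A = {(2n+1, 2n+2), (2n+2, 2n+1) : n ∈ ω}`. -/
def pairRel : Set (ℕ × ℕ) :=
  {p | ∃ n : ℕ, p = (2 * n + 1, 2 * n + 2) ∨ p = (2 * n + 2, 2 * n + 1)}

/-- The coarse structure on ℕ with base `{(F × F) ∪ A : F finite}` (plus the diagonal). -/
def exampleSets : Set (Set (ℕ × ℕ)) :=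
  {E' | Set.diagonal ℕ ⊆ E' ∧
    ∃ F : Finset ℕ, E' ⊆ ((F : Set ℕ) ×ˢ (F : Set ℕ)) ∪ pairRel ∪ Set.diagonal ℕ}


namespace ExampleAux

open CoarseStruct

/-! ### Basic facts about `pairRel` -/

lemma mem_pairRel {x y : ℕ} :
    (x, y) ∈ pairRel ↔ ∃ n : ℕ, (x = 2*n+1 ∧ y = 2*n+2) ∨ (x = 2*n+2 ∧ y = 2*n+1) := by
  simp only [pairRel, Set.mem_setOf_eq, Prod.mk.injEq]

lemma mem_ball_singleton {E : Set (ℕ × ℕ)} {x y : ℕ} :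
    y ∈ ball E {x} ↔ (x, y) ∈ E := by
  constructor
  · rintro ⟨a, ha, h⟩
    rw [Set.mem_singleton_iff] at ha
    subst ha; exact h
  · intro h; exact ⟨x, rfl, h⟩

/-! ### Small sets (logarithmic counting) -/

open Classical in
noncomputable def cnt (S : Set ℕ) (k : ℕ) : ℕ :=
  ((Finset.range (2^k)).filter (fun n => n ∈ S)).card

def Small (S : Set ℕ) : Prop := ∃ c : ℕ, ∀ k, cnt S k ≤ c * (k+1)

lemma small_empty : Small (∅ : Set ℕ) := by
  refine ⟨0, fun k => ?_⟩
  simp [cnt]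

lemma small_union {S T : Set ℕ} (hS : Small S) (hT : Small T) : Small (S ∪ T) := by
  classical
  obtain ⟨c, hc⟩ := hS
  obtain ⟨d, hd⟩ := hT
  refine ⟨c + d, fun k => ?_⟩
  have h1 : cnt (S ∪ T) k ≤ cnt S k + cnt T k := by
    unfold cnt
    refine le_trans (Finset.card_le_card ?_) (Finset.card_union_le _ _)
    intro n hn
    simp only [Finset.mem_filter, Set.mem_union, Finset.mem_union] at hn ⊢
    tauto
  calc cnt (S ∪ T) k ≤ cnt S k + cnt T k := h1
    _ ≤ c * (k+1) + d * (k+1) := Nat.add_le_add (hc k) (hd k)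
    _ = (c + d) * (k+1) := by ring

lemma sq_lt_two_pow {j : ℕ} (hj : 5 ≤ j) : j * j < 2 ^ j := by
  induction j, hj using Nat.le_induction with
  | base => norm_num
  | succ j hj ih =>
    have h2 : 2 ^ (j+1) = 2 * 2 ^ j := by ring
    nlinarith [ih]

lemma exists_two_pow_big (c d : ℕ) : ∃ k, c * (k+1) + d < 2 ^ k := by
  refine ⟨c + d + 5, ?_⟩
  set t := c + d with ht
  have h1 : c * (t + 5 + 1) + d ≤ t * (t + 6) := by
    have hd : d ≤ d * (t + 6) := Nat.le_mul_of_pos_right d (by omega)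
    calc c * (t+5+1) + d = c * (t+6) + d := by ring_nf
      _ ≤ c * (t+6) + d * (t+6) := by omega
      _ = t * (t+6) := by rw [ht]; ring
  have h2 : (t+5) * (t+5) < 2 ^ (t+5) := sq_lt_two_pow (by omega)
  have h3 : t * (t+6) ≤ (t+5) * (t+5) := by nlinarith
  omega

/-- A small set cannot be cofinite. -/
lemma not_small_of_compl_subset {S : Set ℕ} {F : Set ℕ} (hF : F.Finite)
    (h : Sᶜ ⊆ F) : ¬ Small S := by
  classical
  rintro ⟨c, hc⟩
  obtain ⟨k, hk⟩ := exists_two_pow_big c hF.toFinset.card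
  have hsplit : cnt S k + ((Finset.range (2^k)).filter (fun n => ¬ n ∈ S)).card
      = 2 ^ k := by
    unfold cnt
    rw [Finset.card_filter_add_card_filter_not]
    exact Finset.card_range _
  have hcompl : ((Finset.range (2^k)).filter (fun n => ¬ n ∈ S)).card
      ≤ hF.toFinset.card := by
    apply Finset.card_le_card
    intro n hn
    simp only [Finset.mem_filter] at hn
    simpa using h hn.2
  have := hc k
  omega

/-- Every infinite set of naturals contains an infinite small subset. -/
lemma exists_small_infinite_subset {J : Set ℕ} (hJ : J.Infinite) :
    ∃ S : Set ℕ, S ⊆ J ∧ S.Infinite ∧ Small S := by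
  classical
  have hne : ∀ k : ℕ, {x | x ∈ J ∧ 2^k ≤ x}.Nonempty := by
    intro k
    obtain ⟨x, hxJ, hx⟩ := hJ.exists_gt (2^k)
    exact ⟨x, hxJ, le_of_lt hx⟩
  set g : ℕ → ℕ := fun k => sInf {x | x ∈ J ∧ 2^k ≤ x} with hg
  have hgJ : ∀ k, g k ∈ J ∧ 2^k ≤ g k := fun k => Nat.sInf_mem (hne k)
  refine ⟨Set.range g, ?_, ?_, ?_⟩
  · rintro x ⟨k, rfl⟩; exact (hgJ k).1
  · intro hfin
    obtain ⟨M, hM⟩ : ∃ M, ∀ x ∈ Set.range g, x ≤ M := by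
      rcases hfin.bddAbove with ⟨M, hM⟩
      exact ⟨M, fun x hx => hM hx⟩
    have h1 : 2 ^ M ≤ g M := (hgJ M).2
    have h2 : g M ≤ M := hM _ ⟨M, rfl⟩
    have h3 : M < 2 ^ M := Nat.lt_two_pow_self
    omega
  · refine ⟨1, fun k => ?_⟩
    unfold cnt
    have hsub : (Finset.range (2^k)).filter (fun n => n ∈ Set.range g)
        ⊆ (Finset.range k).image g := by
      intro n hn
      simp only [Finset.mem_filter, Finset.mem_range] at hn
      obtain ⟨hn1, j, hj⟩ := hn
      have : j < k := by
        by_contra hjk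
        push_neg at hjk
        have h1 : 2 ^ k ≤ 2 ^ j := Nat.pow_le_pow_right (by norm_num) hjk
        have h2 := (hgJ j).2
        omega
      simp only [Finset.mem_image]
      exact ⟨j, Finset.mem_range.2 this, hj⟩
    calc ((Finset.range (2^k)).filter (fun n => n ∈ Set.range g)).card
        ≤ ((Finset.range k).image g).card := Finset.card_le_card hsub
      _ ≤ k := le_trans Finset.card_image_le (by simp)
      _ ≤ 1 * (k+1) := by omega

/-! ### The relation `PIdx S`: matching edges only for blocks in `S` -/

def PIdx (S : Set ℕ) : Set (ℕ × ℕ) :=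
  {p | ∃ n ∈ S, p = (2*n+1, 2*n+2) ∨ p = (2*n+2, 2*n+1)}

lemma mem_PIdx {S : Set ℕ} {x y : ℕ} :
    (x, y) ∈ PIdx S ↔ ∃ n ∈ S, (x = 2*n+1 ∧ y = 2*n+2) ∨ (x = 2*n+2 ∧ y = 2*n+1) := by
  simp only [PIdx, Set.mem_setOf_eq, Prod.mk.injEq]

lemma PIdx_subset_pairRel (S : Set ℕ) : PIdx S ⊆ pairRel := by
  rintro ⟨x, y⟩ h
  rw [mem_PIdx] at h
  rw [mem_pairRel]
  obtain ⟨n, -, h⟩ := h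
  exact ⟨n, h⟩

lemma PIdx_mono {S T : Set ℕ} (h : S ⊆ T) : PIdx S ⊆ PIdx T := by
  rintro ⟨x, y⟩ hx
  rw [mem_PIdx] at hx ⊢
  obtain ⟨n, hn, hc⟩ := hx
  exact ⟨n, h hn, hc⟩

/-- The perturbed coarse structure: only small index sets of matching edges allowed. -/
noncomputable def C' : CoarseStruct ℕ where
  sets := {E' | Set.diagonal ℕ ⊆ E' ∧ ∃ F : Finset ℕ, ∃ S : Set ℕ, Small S ∧
    E' ⊆ ((F : Set ℕ) ×ˢ (F : Set ℕ)) ∪ PIdx S ∪ Set.diagonal ℕ}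
  diagonal_mem := by
    refine ⟨le_refl _, ∅, ∅, small_empty, ?_⟩
    intro p hp
    exact Or.inr hp
  diagonal_subset := fun E hE => hE.1
  comp_mem := by
    rintro E ⟨hEd, F, S, hS, hE⟩ E' ⟨hE'd, F', S', hS', hE'⟩
    constructor
    · rintro ⟨x, y⟩ h
      have hxy : x = y := h
      exact ⟨x, hEd rfl, by rw [hxy]; exact hE'd rfl⟩
    · classical
      set G : Finset ℕ := ((F ∪ F') ∪ ((F ∪ F').image (· + 1))) ∪ ((F ∪ F').image (· - 1))
        with hG
      have hGval : ∀ a b : ℕ, a ∈ F ∪ F' → (b = a ∨ b = a + 1 ∨ b = a - 1) →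
          b ∈ (G : Set ℕ) := by
        intro a b ha hb
        have : b ∈ G := by
          rcases hb with rfl | rfl | rfl
          · exact Finset.mem_union_left _ (Finset.mem_union_left _ ha)
          · exact Finset.mem_union_left _
              (Finset.mem_union_right _ (Finset.mem_image_of_mem _ ha))
          · exact Finset.mem_union_right _ (Finset.mem_image_of_mem _ ha)
        exact_mod_cast this
      have hFl : ∀ a : ℕ, a ∈ (F : Set ℕ) → a ∈ F ∪ F' := by
        intro a ha
        exact Finset.mem_union_left _ (by exact_mod_cast ha)
      have hFr : ∀ a : ℕ, a ∈ (F' : Set ℕ) → a ∈ F ∪ F' := by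
        intro a ha
        exact Finset.mem_union_right _ (by exact_mod_cast ha)
      refine ⟨G, S ∪ S', small_union hS hS', ?_⟩
      rintro ⟨x, y⟩ ⟨z, hxz, hzy⟩
      simp only at hxz hzy
      rcases hE hxz with (h1 | h1) | h1 <;> rcases hE' hzy with (h2 | h2) | h2
      · -- F×F , F'×F'
        exact Or.inl (Or.inl ⟨hGval x x (hFl x h1.1) (Or.inl rfl),
          hGval y y (hFr y h2.2) (Or.inl rfl)⟩)
      · -- F×F , PIdx S'
        rw [mem_PIdx] at h2
        obtain ⟨n, hn, (⟨hz, hy⟩ | ⟨hz, hy⟩)⟩ := h2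
        · exact Or.inl (Or.inl ⟨hGval x x (hFl x h1.1) (Or.inl rfl),
            hGval z y (hFl z h1.2) (by omega)⟩)
        · exact Or.inl (Or.inl ⟨hGval x x (hFl x h1.1) (Or.inl rfl),
            hGval z y (hFl z h1.2) (by omega)⟩)
      · -- F×F , diag
        have e2 : z = y := h2
        exact Or.inl (Or.inl ⟨hGval x x (hFl x h1.1) (Or.inl rfl),
          hGval z y (hFl z h1.2) (by omega)⟩)
      · -- PIdx S , F'×F'
        rw [mem_PIdx] at h1
        obtain ⟨n, hn, (⟨hx, hz⟩ | ⟨hx, hz⟩)⟩ := h1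
        · exact Or.inl (Or.inl ⟨hGval z x (hFr z h2.1) (by omega),
            hGval y y (hFr y h2.2) (Or.inl rfl)⟩)
        · exact Or.inl (Or.inl ⟨hGval z x (hFr z h2.1) (by omega),
            hGval y y (hFr y h2.2) (Or.inl rfl)⟩)
      · -- PIdx S , PIdx S'
        rw [mem_PIdx] at h1 h2
        obtain ⟨n, hn, (⟨hx, hz⟩ | ⟨hx, hz⟩)⟩ := h1 <;>
          obtain ⟨n', hn', (⟨hz', hy⟩ | ⟨hz', hy⟩)⟩ := h2
        · omega
        · exact Or.inr (show x = y by omega)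
        · exact Or.inr (show x = y by omega)
        · omega
      · -- PIdx S , diag
        have e2 : z = y := h2
        subst e2
        exact Or.inl (Or.inr (PIdx_mono Set.subset_union_left h1))
      · -- diag , F'×F'
        have e1 : x = z := h1
        subst e1
        exact Or.inl (Or.inl ⟨hGval x x (hFr x h2.1) (Or.inl rfl),
          hGval y y (hFr y h2.2) (Or.inl rfl)⟩)
      · -- diag , PIdx S'
        have e1 : x = z := h1
        subst e1
        exact Or.inl (Or.inr (PIdx_mono Set.subset_union_right h2))
      · -- diag , diag
        have e1 : x = z := h1
        have e2 : z = y := h2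
        exact Or.inr (show x = y by omega)
  inv_mem := by
    rintro E ⟨hEd, F, S, hS, hE⟩
    constructor
    · rintro ⟨x, y⟩ h
      simp only [Set.mem_diagonal_iff] at h
      cases h
      exact hEd rfl
    · refine ⟨F, S, hS, ?_⟩
      rintro ⟨x, y⟩ h
      simp only [Set.mem_setOf_eq] at h
      rcases hE h with (h1 | h1) | h1
      · exact Or.inl (Or.inl ⟨h1.2, h1.1⟩)
      · rw [mem_PIdx] at h1
        obtain ⟨n, hn, (⟨hy, hx⟩ | ⟨hy, hx⟩)⟩ := h1
        · exact Or.inl (Or.inr (mem_PIdx.2 ⟨n, hn, Or.inr ⟨hx, hy⟩⟩))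
        · exact Or.inl (Or.inr (mem_PIdx.2 ⟨n, hn, Or.inl ⟨hx, hy⟩⟩))
      · have e : y = x := h1
        exact Or.inr (show ((x, y) : ℕ × ℕ) ∈ Set.diagonal ℕ from e.symm)
  subset_mem := by
    rintro E ⟨hEd, F, S, hS, hE⟩ E' hd hsub
    exact ⟨hd, F, S, hS, hsub.trans hE⟩
  cover := by
    rintro ⟨x, y⟩
    classical
    refine ⟨Set.diagonal ℕ ∪ {(x, y)}, ⟨Set.subset_union_left, {x, y}, ∅, small_empty, ?_⟩, ?_⟩
    · rintro ⟨a, b⟩ (h | h)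
      · exact Or.inr h
      · simp only [Set.mem_singleton_iff, Prod.mk.injEq] at h
        refine Or.inl (Or.inl ⟨?_, ?_⟩) <;> simp [h.1, h.2]
    · exact Or.inr rfl

/-! ### Boundedness = finiteness -/

lemma ball_subset_of_example {E : Set (ℕ × ℕ)} {F : Finset ℕ}
    (hE : E ⊆ ((F : Set ℕ) ×ˢ (F : Set ℕ)) ∪ pairRel ∪ Set.diagonal ℕ) (x : ℕ) :
    ball E {x} ⊆ ↑F ∪ {x, x+1, x-1} := by
  intro y hy
  rw [mem_ball_singleton] at hy
  rcases hE hy with (h | h) | h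
  · exact Or.inl h.2
  · rw [mem_pairRel] at h
    simp only [Set.mem_union, Set.mem_insert_iff, Set.mem_singleton_iff]
    obtain ⟨n, (⟨hx, hy'⟩ | ⟨hx, hy'⟩)⟩ := h <;> [right; right] <;> omega
  · have e : x = y := h
    simp only [Set.mem_union, Set.mem_insert_iff, Set.mem_singleton_iff]
    right; left; omega

lemma finite_of_bounded {D : CoarseStruct ℕ}
    (hsub : ∀ E ∈ D.sets, ∃ F : Finset ℕ,
      E ⊆ ((F : Set ℕ) ×ˢ (F : Set ℕ)) ∪ pairRel ∪ Set.diagonal ℕ)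
    {B : Set ℕ} (h : D.IsBounded B) : B.Finite := by
  obtain ⟨E, hE, x, hBx⟩ := h
  obtain ⟨F, hF⟩ := hsub E hE
  have hsub2 : B ⊆ ↑F ∪ {x, x+1, x-1} := hBx.trans (ball_subset_of_example hF x)
  exact (F.finite_toSet.union
    (((Set.finite_singleton (x-1)).insert (x+1)).insert x)).subset hsub2

lemma bounded_of_finite {D : CoarseStruct ℕ}
    (hup : ∀ B : Set ℕ, B.Finite →
      (Set.diagonal ℕ ∪ ({0} : Set ℕ) ×ˢ (insert 0 B)) ∈ D.sets)
    {B : Set ℕ} (hB : B.Finite) : D.IsBounded B := by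
  refine ⟨_, hup B hB, 0, ?_⟩
  intro b hb
  rw [mem_ball_singleton]
  exact Or.inr ⟨rfl, Or.inr hb⟩

lemma hupC {C : CoarseStruct ℕ} (hC : C.sets = exampleSets) :
    ∀ B : Set ℕ, B.Finite →
      (Set.diagonal ℕ ∪ ({0} : Set ℕ) ×ˢ (insert 0 B)) ∈ C.sets := by
  intro B hB
  rw [hC]
  classical
  refine ⟨Set.subset_union_left, insert 0 hB.toFinset, ?_⟩
  rintro ⟨a, b⟩ (h | ⟨ha, hb⟩)
  · exact Or.inr h
  · refine Or.inl (Or.inl ⟨?_, ?_⟩)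
    · have : a = 0 := ha
      simp [this]
    · simp only [Set.mem_insert_iff] at hb
      simp only [Finset.coe_insert, Set.mem_insert_iff, Set.Finite.coe_toFinset]
      exact hb

lemma hupC' : ∀ B : Set ℕ, B.Finite →
    (Set.diagonal ℕ ∪ ({0} : Set ℕ) ×ˢ (insert 0 B)) ∈ C'.sets := by
  intro B hB
  classical
  refine ⟨Set.subset_union_left, insert 0 hB.toFinset, ∅, small_empty, ?_⟩
  rintro ⟨a, b⟩ (h | ⟨ha, hb⟩)
  · exact Or.inr h
  · refine Or.inl (Or.inl ⟨?_, ?_⟩)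
    · have : a = 0 := ha
      simp [this]
    · simp only [Set.mem_insert_iff] at hb
      simp only [Finset.coe_insert, Set.mem_insert_iff, Set.Finite.coe_toFinset]
      exact hb

lemma boundedC_iff {C : CoarseStruct ℕ} (hC : C.sets = exampleSets) (B : Set ℕ) :
    C.IsBounded B ↔ B.Finite := by
  constructor
  · apply finite_of_bounded
    intro E hE
    rw [hC] at hE
    exact ⟨hE.2.choose, hE.2.choose_spec⟩
  · exact bounded_of_finite (hupC hC)

lemma boundedC'_iff (B : Set ℕ) : C'.IsBounded B ↔ B.Finite := by
  constructor
  · apply finite_of_bounded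
    rintro E ⟨hd, F, S, hS, hsub⟩
    refine ⟨F, hsub.trans ?_⟩
    rintro p ((h | h) | h)
    · exact Or.inl (Or.inl h)
    · exact Or.inl (Or.inr (PIdx_subset_pairRel S h))
    · exact Or.inr h
  · exact bounded_of_finite hupC'

lemma C'_sets_subset {C : CoarseStruct ℕ} (hC : C.sets = exampleSets) :
    C'.sets ⊆ C.sets := by
  rintro E ⟨hd, F, S, hS, hsub⟩
  rw [hC]
  refine ⟨hd, F, hsub.trans ?_⟩
  rintro p ((h | h) | h)
  · exact Or.inl (Or.inl h)
  · exact Or.inl (Or.inr (PIdx_subset_pairRel S h))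
  · exact Or.inr h

/-! ### Largeness and discreteness of the evens -/

lemma large_evens {C : CoarseStruct ℕ} (hC : C.sets = exampleSets) :
    C.Large {n : ℕ | Even n} := by
  refine ⟨pairRel ∪ Set.diagonal ℕ, ?_, ?_⟩
  · rw [hC]
    refine ⟨Set.subset_union_right, ∅, ?_⟩
    rintro p (h | h)
    · exact Or.inl (Or.inr h)
    · exact Or.inr h
  · apply Set.eq_univ_of_forall
    intro x
    rcases Nat.even_or_odd x with hx | hx
    · exact ⟨x, hx, Or.inr rfl⟩
    · obtain ⟨k, hk⟩ := hx
      refine ⟨2*k+2, ⟨k+1, by omega⟩, Or.inl (mem_pairRel.2 ⟨k, Or.inr ⟨rfl, by omega⟩⟩)⟩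

lemma discreteOn_evens {C : CoarseStruct ℕ} (hC : C.sets = exampleSets) :
    C.DiscreteOn {n : ℕ | Even n} := by
  intro E hE
  rw [hC] at hE
  obtain ⟨hEd, F, hF⟩ := hE
  refine ⟨↑F, bounded_of_finite (hupC hC) F.finite_toSet, ?_⟩
  rintro y ⟨hy, hyF⟩
  apply Set.eq_singleton_iff_unique_mem.2
  refine ⟨⟨mem_ball_singleton.2 (hEd rfl), hy⟩, ?_⟩
  rintro z ⟨hz, hzE⟩
  rw [mem_ball_singleton] at hz
  rcases hF hz with (h | h) | h
  · exact absurd h.1 hyF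
  · rw [mem_pairRel] at h
    exfalso
    obtain ⟨r, hr⟩ := hy
    obtain ⟨s, hs⟩ := hzE
    obtain ⟨n, (⟨h1, h2⟩ | ⟨h1, h2⟩)⟩ := h <;> omega
  · exact (show y = z from h).symm

/-! ### λ-equivalence of `C` and `C'` -/

lemma helper_pair {X Y : Set ℕ} (hI : {n | 2*n+1 ∈ X ∧ 2*n+2 ∈ Y}.Infinite) :
    ∃ X'' Y'' : Set ℕ, X'' ⊆ X ∧ Y'' ⊆ Y ∧ X''.Infinite ∧ Y''.Infinite ∧
      C'.Close X'' Y'' := by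
  obtain ⟨S, hSJ, hSinf, hSsm⟩ := exists_small_infinite_subset hI
  refine ⟨(fun n => 2*n+1) '' S, (fun n => 2*n+2) '' S, ?_, ?_, ?_, ?_, ?_⟩
  · rintro x ⟨n, hn, rfl⟩
    exact (hSJ hn).1
  · rintro x ⟨n, hn, rfl⟩
    exact (hSJ hn).2
  · exact hSinf.image (fun a _ b _ h => by omega)
  · exact hSinf.image (fun a _ b _ h => by omega)
  · refine ⟨PIdx S ∪ Set.diagonal ℕ, ?_, ?_, ?_⟩
    · refine ⟨Set.subset_union_right, ∅, S, hSsm, ?_⟩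
      rintro p (h | h)
      · exact Or.inl (Or.inr h)
      · exact Or.inr h
    · rintro x ⟨n, hn, rfl⟩
      exact ⟨2*n+2, ⟨n, hn, rfl⟩, Or.inl (mem_PIdx.2 ⟨n, hn, Or.inr ⟨rfl, rfl⟩⟩)⟩
    · rintro y ⟨n, hn, rfl⟩
      exact ⟨2*n+1, ⟨n, hn, rfl⟩, Or.inl (mem_PIdx.2 ⟨n, hn, Or.inl ⟨rfl, rfl⟩⟩)⟩

lemma linked_iff {C : CoarseStruct ℕ} (hC : C.sets = exampleSets) (A B : Set ℕ) :
    C.Linked A B ↔ C'.Linked A B := by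
  constructor
  · rintro (⟨h1, h2⟩ | ⟨A', B', hA', hB', hnA, hnB, E, hE, hAB, hBA⟩)
    · exact Or.inl ⟨(boundedC'_iff _).2 ((boundedC_iff hC _).1 h1),
        (boundedC'_iff _).2 ((boundedC_iff hC _).1 h2)⟩
    · have hAinf : A'.Infinite := fun hfin => hnA ((boundedC_iff hC _).2 hfin)
      rw [hC] at hE
      obtain ⟨hEd, F, hF⟩ := hE
      by_cases hint : (A' ∩ B').Infinite
      · refine Or.inr ⟨A' ∩ B', A' ∩ B', Set.inter_subset_left.trans hA',
          Set.inter_subset_right.trans hB',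
          fun h => hint ((boundedC'_iff _).1 h), fun h => hint ((boundedC'_iff _).1 h),
          Set.diagonal ℕ, C'.diagonal_mem, ?_, ?_⟩ <;>
        · intro a ha
          exact ⟨a, ha, rfl⟩
      · have hKinf : (A' \ (↑F ∪ B')).Infinite := by
          have hcov : A' ⊆ (A' \ (↑F ∪ B')) ∪ (↑F ∪ (A' ∩ B')) := by
            intro a ha
            by_cases h1 : a ∈ (↑F : Set ℕ)
            · exact Or.inr (Or.inl h1)
            · by_cases h2 : a ∈ B'
              · exact Or.inr (Or.inr ⟨ha, h2⟩)
              · refine Or.inl ⟨ha, fun hc => ?_⟩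
                rcases hc with hc | hc
                exacts [h1 hc, h2 hc]
          intro hfin
          exact hAinf ((hfin.union (F.finite_toSet.union (Set.not_infinite.1 hint))).subset
            hcov)
        have hcover : (A' \ (↑F ∪ B')) ⊆
            ((fun n => 2*n+1) '' {n | 2*n+1 ∈ A' ∧ 2*n+2 ∈ B'}) ∪
            ((fun n => 2*n+2) '' {n | 2*n+2 ∈ A' ∧ 2*n+1 ∈ B'}) := by
          rintro a ⟨haA, haN⟩
          obtain ⟨b, hbB, hba⟩ := hAB haA
          rcases hF hba with (h | h) | h
          · exact absurd (Or.inl h.2) haN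
          · rw [mem_pairRel] at h
            obtain ⟨n, (⟨h1, h2⟩ | ⟨h1, h2⟩)⟩ := h
            · refine Or.inr ⟨n, ⟨?_, ?_⟩, h2.symm⟩
              · rw [← h2]; exact haA
              · rw [← h1]; exact hbB
            · refine Or.inl ⟨n, ⟨?_, ?_⟩, h2.symm⟩
              · rw [← h2]; exact haA
              · rw [← h1]; exact hbB
          · have e : b = a := h
            exact absurd (Or.inr (e ▸ hbB)) haN
        have hI12 : {n | 2*n+1 ∈ A' ∧ 2*n+2 ∈ B'}.Infinite ∨
            {n | 2*n+2 ∈ A' ∧ 2*n+1 ∈ B'}.Infinite := by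
          by_contra hcon
          push_neg at hcon
          apply hKinf
          exact ((hcon.1.image _).union
            (hcon.2.image _)).subset hcover
        rcases hI12 with hI | hI
        · obtain ⟨X'', Y'', hX, hY, hXinf, hYinf, hclose⟩ := helper_pair hI
          exact Or.inr ⟨X'', Y'', hX.trans hA', hY.trans hB',
            fun h => hXinf ((boundedC'_iff _).1 h), fun h => hYinf ((boundedC'_iff _).1 h),
            hclose⟩
        · have hI' : {n | 2*n+1 ∈ B' ∧ 2*n+2 ∈ A'}.Infinite :=
            hI.mono (fun n hn => ⟨hn.2, hn.1⟩)
          obtain ⟨X'', Y'', hX, hY, hXinf, hYinf, E'', hE'', h1, h2⟩ := helper_pair hI'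
          exact Or.inr ⟨Y'', X'', hY.trans hA', hX.trans hB',
            fun h => hYinf ((boundedC'_iff _).1 h), fun h => hXinf ((boundedC'_iff _).1 h),
            E'', hE'', h2, h1⟩
  · rintro (⟨h1, h2⟩ | ⟨A', B', hA', hB', hnA, hnB, E, hE, hAB, hBA⟩)
    · exact Or.inl ⟨(boundedC_iff hC _).2 ((boundedC'_iff _).1 h1),
        (boundedC_iff hC _).2 ((boundedC'_iff _).1 h2)⟩
    · exact Or.inr ⟨A', B', hA', hB',
        fun h => hnA ((boundedC'_iff _).2 ((boundedC_iff hC _).1 h)),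
        fun h => hnB ((boundedC'_iff _).2 ((boundedC_iff hC _).1 h)),
        E, C'_sets_subset hC hE, hAB, hBA⟩

lemma pair_not_mem : (pairRel ∪ Set.diagonal ℕ) ∉ C'.sets := by
  rintro ⟨hd, F, S, hS, hsub⟩
  have hcompl : Sᶜ ⊆ (fun n => 2*n+1) ⁻¹' (↑F : Set ℕ) := by
    intro n hn
    have hmem : ((2*n+1 : ℕ), (2*n+2 : ℕ)) ∈ pairRel ∪ Set.diagonal ℕ :=
      Or.inl (mem_pairRel.2 ⟨n, Or.inl ⟨rfl, rfl⟩⟩)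
    rcases hsub hmem with (h | h) | h
    · exact h.1
    · rw [mem_PIdx] at h
      exfalso
      obtain ⟨n', hn', (⟨h1, h2⟩ | ⟨h1, h2⟩)⟩ := h
      · have : n' = n := by omega
        exact hn (this ▸ hn')
      · omega
    · have : (2*n+1 : ℕ) = 2*n+2 := h
      omega
  exact not_small_of_compl_subset
    (F.finite_toSet.preimage (fun a _ b _ h => by omega)) hcompl hS

end ExampleAux

/-- The even numbers are large and discrete in `(ℕ, E)`, so `(ℕ, E)` is
coarsely discrete; moreover `(ℕ, E)` is not λ-rigid. -/
theorem example_coarselyDiscrete_not_lambdaRigid (C : CoarseStruct ℕ)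
    (hC : C.sets = exampleSets) :
    C.Large {n : ℕ | Even n} ∧ C.DiscreteOn {n : ℕ | Even n} ∧
    C.CoarselyDiscrete ∧ ¬C.LambdaRigid := by
  have hL := ExampleAux.large_evens hC
  have hD := ExampleAux.discreteOn_evens hC
  refine ⟨hL, hD, ⟨_, hL, hD⟩, ?_⟩
  intro hrig
  have heq := hrig ExampleAux.C' (fun A B => ExampleAux.linked_iff hC A B)
  have hsets : ExampleAux.C'.sets = C.sets := by rw [heq]
  have hmem : (pairRel ∪ Set.diagonal ℕ) ∈ C.sets := by
    rw [hC]
    refine ⟨Set.subset_union_right, ∅, ?_⟩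
    rintro p (h | h)
    · exact Or.inl (Or.inr h)
    · exact Or.inr h
  rw [← hsets] at hmem
  exact ExampleAux.pair_not_mem hmem
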